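/- Let (n,d,m) be one of the triples: (2,d,−1) with 5 ≤ d ≤ 14; (4,4,−1), (4,5,−1), (4,6,−1), (4,5,0), (4,6,0); (6,3,−1), (6,4,−1), (6,4,0); (8,3,−1), (8,3,0); (10,3,−1), (10,3,0), (10,3,1). Then for all nonzero integers r and ř, regarding the period matrices as linear maps ℂ^{I_d} → ℂ^{I_{(n/2)d−n−2}}, one has ker(r·[P_{i+j}] + ř·[(P̌_m)_{i+j}]) = ker[P_{i+j}] ∩ ker[(P̌_m)_{i+j}]; in particular this kernel does not depend on r and ř. -/

import Mathlib

open Finset Matrix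

/-- `ζ_{2d} = exp(2πi/(2d))`. -/
noncomputable def zeta2d (d : ℕ) : ℂ :=
  Complex.exp (2 * Real.pi * Complex.I / (2 * (d : ℂ)))

/-- The even-position index `2e` in `{0,…,n+1}` (with `n = 2h`). -/
def evIdx (h : ℕ) (e : Fin (h + 1)) : Fin (2 * h + 2) :=
  ⟨2 * e.1, by have := e.isLt; omega⟩

/-- The odd-position index `2e+1` in `{0,…,n+1}` (with `n = 2h`). -/
def odIdx (h : ℕ) (e : Fin (h + 1)) : Fin (2 * h + 2) :=
  ⟨2 * e.1 + 1, by have := e.isLt; omega⟩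

/-- The index set `I_N`: tuples `(i_0,…,i_{n+1})` with `0 ≤ i_e ≤ d-2` and `∑ i_e = N`,
for `n = 2h` even. -/
abbrev IdxSet (h d N : ℕ) : Type :=
  {i : Fin (2 * h + 2) → Fin (d - 1) // ∑ e, (i e).1 = N}

/-- The period vector `p^{a,b}` of the linear cycle `ℙ^{n/2}_{a,b}` in the Fermat variety,
extended by zero to all integer tuples. -/
noncomputable def pvec (h d : ℕ) (a : Fin (h + 1) → ℕ) (b : Equiv.Perm (Fin (2 * h + 2)))
    (i : Fin (2 * h + 2) → ℕ) : ℂ :=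
  if ∀ e : Fin (h + 1), i (b (evIdx h e)) + i (b (odIdx h e)) = d - 2 then
    zeta2d d ^ (∑ e : Fin (h + 1), (i (b (evIdx h e)) + 1) * (1 + 2 * a e))
  else 0

/-- The period matrix `[p_{i+j}]` with rows indexed by `I_{(n/2)d-n-2}` and columns by `I_d`. -/
noncomputable def pmat (h d : ℕ) (p : (Fin (2 * h + 2) → ℕ) → ℂ) :
    Matrix (IdxSet h d (h * d - (2 * h + 2))) (IdxSet h d d) ℂ :=
  Matrix.of fun i j => p fun e => (i.1 e).1 + (j.1 e).1

/-- The period vector `P` of the linear cycle with `a = (0,…,0)` and `b = id`. -/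
noncomputable def Pvec (h d : ℕ) : (Fin (2 * h + 2) → ℕ) → ℂ :=
  pvec h d (fun _ => 0) (Equiv.refl _)

/-- The period vector `P̌_m` (with `μ = m+1`): `a` has first `μ` entries `0`, the rest `1`,
and `b = id`. -/
noncomputable def PcheckVec (h d μ : ℕ) : (Fin (2 * h + 2) → ℕ) → ℂ :=
  pvec h d (fun e => if e.1 < μ then 0 else 1) (Equiv.refl _)

/-- The combinatorial constant `C_{α_1,…,α_s}`. -/
def Ccoef (n d : ℕ) {s : ℕ} (α : Fin s → ℕ) : ℤ :=
  ((n + 1 + d).choose (n + 1) : ℤ) -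
    ∑ k ∈ Finset.Icc 1 s, (-1 : ℤ) ^ (k - 1) *
      ∑ T ∈ Finset.univ.filter (fun T : Finset (Fin s) => T.card = k ∧ ∑ i ∈ T, α i ≤ d),
        (((n + 1 + d - ∑ i ∈ T, α i).choose (n + 1) : ℤ))

/-- The sequence `x^s, y^t` (x repeated s times followed by y repeated t times). -/
def twoBlock (x y s t : ℕ) : Fin (s + t) → ℕ := fun i => if i.1 < s then x else y

/-- `K^d_n(m) = 2·C_{1^{n/2+1},(d-1)^{n/2+1}} − C_{1^{n−m+1},(d−1)^{m+1}}`, with `n = 2h`,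
`μ = m+1`. -/
def Kdef (h d μ : ℕ) : ℤ :=
  2 * Ccoef (2 * h) d (twoBlock 1 (d - 1) (h + 1) (h + 1)) -
    Ccoef (2 * h) d (twoBlock 1 (d - 1) (2 * h + 2 - μ) μ)

/-- The list of triples `(n,d,m)` of Theorem `27.03.17`, encoded as `(h, d, μ)` with
`n = 2h` and `μ = m+1`. -/
def TripleList (h d μ : ℕ) : Prop :=
  (h = 1 ∧ 5 ≤ d ∧ d ≤ 14 ∧ μ = 0) ∨
  (h = 2 ∧ ((d = 4 ∧ μ = 0) ∨ (d = 5 ∧ μ = 0) ∨ (d = 6 ∧ μ = 0) ∨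
            (d = 5 ∧ μ = 1) ∨ (d = 6 ∧ μ = 1))) ∨
  (h = 3 ∧ ((d = 3 ∧ μ = 0) ∨ (d = 4 ∧ μ = 0) ∨ (d = 4 ∧ μ = 1))) ∨
  (h = 4 ∧ d = 3 ∧ (μ = 0 ∨ μ = 1)) ∨
  (h = 5 ∧ d = 3 ∧ (μ = 0 ∨ μ = 1 ∨ μ = 2))

section Aux

lemma zeta2d_ne_zero (d : ℕ) : zeta2d d ≠ 0 := Complex.exp_ne_zero _

lemma zeta2d_sq_ne_one (d : ℕ) (hd : 2 ≤ d) : (zeta2d d) ^ 2 ≠ 1 := by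
  intro hone
  have hd0 : (d : ℂ) ≠ 0 := Nat.cast_ne_zero.mpr (by omega)
  rw [zeta2d, ← Complex.exp_nat_mul, Complex.exp_eq_one_iff] at hone
  obtain ⟨n, hn⟩ := hone
  have hπ : (Real.pi : ℂ) ≠ 0 := Complex.ofReal_ne_zero.mpr Real.pi_ne_zero
  have hnd : (n : ℂ) * d = 1 := by
    field_simp at hn
    have h2πI : (2 : ℂ) * Real.pi * Complex.I ≠ 0 := by
      intro hz
      rcases mul_eq_zero.mp hz with hz | hz
      · rcases mul_eq_zero.mp hz with hz | hz
        · norm_num at hz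
        · exact hπ hz
      · exact Complex.I_ne_zero hz
    have h2 : (2 * (Real.pi:ℂ) * Complex.I) * 2 = (2 * Real.pi * Complex.I) * ((n:ℂ) * (2 * d)) := by
      push_cast at hn
      linear_combination (2 * (Real.pi:ℂ) * Complex.I) * hn
    have h3 := mul_left_cancel₀ h2πI h2
    linear_combination (-1/2 : ℂ) * h3
  have hnd' : (n : ℤ) * d = 1 := by exact_mod_cast hnd
  have : (d:ℤ) ∣ 1 := ⟨n, by linarith⟩
  have := Int.le_of_dvd one_pos this
  omega

lemma evIdx_ne_odIdx (h : ℕ) (e e' : Fin (h+1)) : evIdx h e ≠ odIdx h e' := by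
  intro H; have := congrArg Fin.val H; simp only [evIdx, odIdx] at this; omega

lemma evIdx_ne_evIdx (h : ℕ) {e e' : Fin (h+1)} (he : e ≠ e') : evIdx h e ≠ evIdx h e' := by
  intro H; have := congrArg Fin.val H; simp only [evIdx] at this
  exact he (Fin.ext (by omega))

lemma odIdx_ne_odIdx (h : ℕ) {e e' : Fin (h+1)} (he : e ≠ e') : odIdx h e ≠ odIdx h e' := by
  intro H; have := congrArg Fin.val H; simp only [odIdx] at this
  exact he (Fin.ext (by omega))

lemma sum_pairs (h : ℕ) (f : Fin (2*h+2) → ℕ) :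
    ∑ k, f k = ∑ e : Fin (h+1), (f (evIdx h e) + f (odIdx h e)) := by
  classical
  let g : Fin (h+1) × Fin 2 → Fin (2*h+2) := fun p => ⟨2*p.1.1 + p.2.1, by
    have := p.1.isLt; have := p.2.isLt; omega⟩
  have hg : Function.Bijective g := by
    constructor
    · rintro ⟨e1, b1⟩ ⟨e2, b2⟩ hp
      have hv := congrArg Fin.val hp
      simp only [g] at hv
      have hb1 := b1.isLt; have hb2 := b2.isLt
      have : e1.1 = e2.1 ∧ b1.1 = b2.1 := by omega
      exact Prod.ext (Fin.ext this.1) (Fin.ext this.2)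
    · intro k
      refine ⟨(⟨k.1 / 2, by have := k.isLt; omega⟩, ⟨k.1 % 2, by omega⟩), ?_⟩
      apply Fin.ext
      simp only [g]
      omega
  rw [← Function.Bijective.sum_comp hg f, Fintype.sum_prod_type]
  refine Finset.sum_congr rfl fun e _ => ?_
  rw [Fin.sum_univ_two]
  have h0 : g (e, 0) = evIdx h e := Fin.ext (by simp [g, evIdx])
  have h1 : g (e, 1) = odIdx h e := Fin.ext (by simp [g, odIdx])
  rw [h0, h1]

lemma sum_add_at {n : ℕ} (f g : Fin n → ℕ) (e0 : Fin n) (c : ℕ)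
    (h0 : g e0 = f e0 + c) (hrest : ∀ e, e ≠ e0 → g e = f e) :
    ∑ e, g e = (∑ e, f e) + c := by
  classical
  calc ∑ e, g e = g e0 + ∑ e ∈ Finset.univ.erase e0, g e :=
        (Finset.add_sum_erase _ g (Finset.mem_univ e0)).symm
    _ = (f e0 + c) + ∑ e ∈ Finset.univ.erase e0, f e := by
        rw [h0]; congr 1
        exact Finset.sum_congr rfl fun e he => hrest e (Finset.ne_of_mem_erase he)
    _ = (f e0 + ∑ e ∈ Finset.univ.erase e0, f e) + c := by ring
    _ = (∑ e, f e) + c := by rw [Finset.add_sum_erase _ f (Finset.mem_univ e0)]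

lemma sum_pair_swap {n : ℕ} (f g : Fin n → ℕ) (a b : Fin n) (hab : a ≠ b)
    (hsum : g a + g b = f a + f b) (hrest : ∀ k, k ≠ a → k ≠ b → g k = f k) :
    ∑ k, g k = ∑ k, f k := by
  classical
  have hmem : b ∈ (Finset.univ : Finset (Fin n)).erase a :=
    Finset.mem_erase.mpr ⟨hab.symm, Finset.mem_univ b⟩
  have hS : ∑ k ∈ ((Finset.univ : Finset (Fin n)).erase a).erase b, g k
      = ∑ k ∈ ((Finset.univ : Finset (Fin n)).erase a).erase b, f k :=
    Finset.sum_congr rfl fun k hk => hrest k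
      (Finset.ne_of_mem_erase (Finset.mem_of_mem_erase hk)) (Finset.ne_of_mem_erase hk)
  calc ∑ k, g k = g a + (g b + ∑ k ∈ (Finset.univ.erase a).erase b, g k) := by
        rw [Finset.add_sum_erase _ g hmem, Finset.add_sum_erase _ g (Finset.mem_univ a)]
    _ = f a + (f b + ∑ k ∈ (Finset.univ.erase a).erase b, f k) := by rw [hS]; omega
    _ = ∑ k, f k := by
        rw [Finset.add_sum_erase _ f hmem, Finset.add_sum_erase _ f (Finset.mem_univ a)]

lemma sum_if_lt (A μ n : ℕ) (hμ : μ ≤ n) :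
    ∑ k ∈ Finset.range n, (if k < μ then A else 0) = μ * A := by
  induction n with
  | zero => have : μ = 0 := by omega
            simp [this]
  | succ n ih =>
    rw [Finset.sum_range_succ]
    by_cases hμn : μ ≤ n
    · rw [if_neg (by omega), add_zero, ih hμn]
    · have hμ1 : μ = n + 1 := by omega
      subst hμ1
      rw [if_pos (by omega),
        Finset.sum_congr rfl fun k hk => if_pos (by have := Finset.mem_range.mp hk; omega)]
      simp [Finset.sum_const, Finset.card_range]
      ring

lemma cancel_lemma (ζ r rc F G : ℂ) (hζ : ζ ≠ 0) (hζ2 : ζ^2 ≠ 1)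
    (hr : r ≠ 0) (hrc : rc ≠ 0) (E E' : ℕ)
    (h1 : r * (ζ^E * F) + rc * (ζ^E' * G) = 0)
    (h2 : r * (ζ^(E+1) * F) + rc * (ζ^(E'+3) * G) = 0) :
    F = 0 ∧ G = 0 := by
  have key : (rc * ζ^E' * ζ * (ζ^2 - 1)) * G = 0 := by
    linear_combination h2 - ζ * h1
  have hG : G = 0 := by
    refine (mul_eq_zero.mp key).resolve_left ?_
    exact mul_ne_zero (mul_ne_zero (mul_ne_zero hrc (pow_ne_zero _ hζ)) hζ)
      (sub_ne_zero.mpr hζ2)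
  refine ⟨?_, hG⟩
  have h1' : (r * ζ^E) * F = 0 := by
    linear_combination h1 - (rc * ζ^E') * hG
  exact (mul_eq_zero.mp h1').resolve_left (mul_ne_zero hr (pow_ne_zero _ hζ))

end Aux

noncomputable def Fsum (h d : ℕ) (w : Fin (h+1) → ℕ) (x : IdxSet h d d → ℂ)
    (τ : Fin (h+1) → ℕ) : ℂ :=
  ∑ j : IdxSet h d d,
    if ∀ e : Fin (h+1), τ e + ((j.1 (evIdx h e)).1 + (j.1 (odIdx h e)).1) = d - 2 then
      zeta2d d ^ (∑ e : Fin (h+1), (j.1 (evIdx h e)).1 * w e) * x j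
    else 0

lemma rowsum_eq (h d : ℕ) (a : Fin (h+1) → ℕ) (x : IdxSet h d d → ℂ)
    (i : IdxSet h d (h*d - (2*h+2))) :
    ∑ j, pmat h d (pvec h d a (Equiv.refl _)) i j * x j
      = zeta2d d ^ (∑ e : Fin (h+1), ((i.1 (evIdx h e)).1 + 1) * (1 + 2 * a e)) *
        Fsum h d (fun e => 1 + 2 * a e) x
          (fun e => (i.1 (evIdx h e)).1 + (i.1 (odIdx h e)).1) := by
  rw [Fsum, Finset.mul_sum]
  refine Finset.sum_congr rfl fun j _ => ?_
  simp only [pmat, Matrix.of_apply, pvec, Equiv.refl_apply]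
  by_cases hc : ∀ e : Fin (h+1),
      ((i.1 (evIdx h e)).1 + (i.1 (odIdx h e)).1)
        + ((j.1 (evIdx h e)).1 + (j.1 (odIdx h e)).1) = d - 2
  · rw [if_pos hc]
    have hc' : ∀ e : Fin (h+1), (i.1 (evIdx h e)).1 + (j.1 (evIdx h e)).1 + ((i.1 (odIdx h e)).1 + (j.1 (odIdx h e)).1) = d - 2 := fun e => by have := hc e; omega
    simp only [hc', implies_true, ↓reduceIte]
    have hexp : ∑ e : Fin (h+1), (((i.1 (evIdx h e)).1 + (j.1 (evIdx h e)).1) + 1) * (1 + 2 * a e)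
        = (∑ e : Fin (h+1), ((i.1 (evIdx h e)).1 + 1) * (1 + 2 * a e))
          + ∑ e : Fin (h+1), (j.1 (evIdx h e)).1 * (1 + 2 * a e) := by
      rw [← Finset.sum_add_distrib]
      exact Finset.sum_congr rfl fun e _ => by ring
    rw [hexp, pow_add]
    ring
  · rw [if_neg hc, mul_zero]
    have hc' : ¬ ∀ e : Fin (h+1), (i.1 (evIdx h e)).1 + (j.1 (evIdx h e)).1 + ((i.1 (odIdx h e)).1 + (j.1 (odIdx h e)).1) = d - 2 := fun hcc => hc (fun e => by have := hcc e; omega)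
    simp only [hc', ↓reduceIte, zero_mul]

def modRow (h d : ℕ) (f : Fin (2*h+2) → Fin (d-1)) (e0 : Fin (h+1)) (nE nO : Fin (d-1)) :
    Fin (2*h+2) → Fin (d-1) :=
  fun k => if k = evIdx h e0 then nE else if k = odIdx h e0 then nO else f k

lemma modRow_ev0 (h d : ℕ) (f : Fin (2*h+2) → Fin (d-1)) (e0 : Fin (h+1)) (nE nO : Fin (d-1)) :
    modRow h d f e0 nE nO (evIdx h e0) = nE := if_pos rfl

lemma modRow_od0 (h d : ℕ) (f : Fin (2*h+2) → Fin (d-1)) (e0 : Fin (h+1)) (nE nO : Fin (d-1)) :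
    modRow h d f e0 nE nO (odIdx h e0) = nO := by
  rw [modRow, if_neg (Ne.symm (evIdx_ne_odIdx h e0 e0)), if_pos rfl]

lemma modRow_other (h d : ℕ) (f : Fin (2*h+2) → Fin (d-1)) (e0 : Fin (h+1)) (nE nO : Fin (d-1))
    (k : Fin (2*h+2)) (h1 : k ≠ evIdx h e0) (h2 : k ≠ odIdx h e0) :
    modRow h d f e0 nE nO k = f k := by
  rw [modRow, if_neg h1, if_neg h2]

lemma modRow_ev (h d : ℕ) (f : Fin (2*h+2) → Fin (d-1)) (e0 : Fin (h+1)) (nE nO : Fin (d-1))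
    (e : Fin (h+1)) (he : e ≠ e0) :
    modRow h d f e0 nE nO (evIdx h e) = f (evIdx h e) :=
  modRow_other h d f e0 nE nO _ (evIdx_ne_evIdx h he) (evIdx_ne_odIdx h e e0)

lemma modRow_od (h d : ℕ) (f : Fin (2*h+2) → Fin (d-1)) (e0 : Fin (h+1)) (nE nO : Fin (d-1))
    (e : Fin (h+1)) (he : e ≠ e0) :
    modRow h d f e0 nE nO (odIdx h e) = f (odIdx h e) :=
  modRow_other h d f e0 nE nO _ (Ne.symm (evIdx_ne_odIdx h e0 e)) (odIdx_ne_odIdx h he)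

lemma row_zero (h d μ : ℕ) (hd : 3 ≤ d) (hμh : μ ≤ h)
    (harith : μ * (d-2) + 3 ≤ h * (d-2))
    (r rc : ℂ) (hr : r ≠ 0) (hrc : rc ≠ 0) (x : IdxSet h d d → ℂ)
    (hx : ∀ k : IdxSet h d (h*d - (2*h+2)),
      r * (∑ j, pmat h d (Pvec h d) k j * x j)
        + rc * (∑ j, pmat h d (PcheckVec h d μ) k j * x j) = 0)
    (i : IdxSet h d (h*d - (2*h+2))) :
    (∑ j, pmat h d (Pvec h d) i j * x j) = 0 ∧
    (∑ j, pmat h d (PcheckVec h d μ) i j * x j) = 0 := by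
  classical
  by_cases hbig : ∃ e : Fin (h+1), d - 1 ≤ (i.1 (evIdx h e)).1 + (i.1 (odIdx h e)).1
  · obtain ⟨e, he⟩ := hbig
    have hzero : ∀ (a : Fin (h+1) → ℕ),
        ∑ j, pmat h d (pvec h d a (Equiv.refl _)) i j * x j = 0 := by
      intro a
      refine Finset.sum_eq_zero fun j _ => ?_
      have hz : pmat h d (pvec h d a (Equiv.refl _)) i j = 0 := by
        simp only [pmat, Matrix.of_apply, pvec, Equiv.refl_apply]
        have hc : ¬ ∀ e : Fin (h+1), (i.1 (evIdx h e)).1 + (j.1 (evIdx h e)).1 + ((i.1 (odIdx h e)).1 + (j.1 (odIdx h e)).1) = d - 2 := fun hc => by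
          have := hc e
          omega
        simp only [hc, ↓reduceIte]
      rw [hz, zero_mul]
    exact ⟨hzero _, hzero _⟩
  · push_neg at hbig
    have hζ0 := zeta2d_ne_zero d
    have hζ2 := zeta2d_sq_ne_one d (by omega)
    have hτle : ∀ e : Fin (h+1), (i.1 (evIdx h e)).1 + (i.1 (odIdx h e)).1 ≤ d - 2 :=
      fun e => by have := hbig e; omega
    have hsum : ∑ e : Fin (h+1), ((i.1 (evIdx h e)).1 + (i.1 (odIdx h e)).1)
        = h * d - (2*h+2) := by
      have h2 := i.2
      rw [sum_pairs h (fun k => (i.1 k).1)] at h2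
      exact h2
    have hex : ∃ e0 : Fin (h+1), μ ≤ e0.1 ∧ 1 ≤ (i.1 (evIdx h e0)).1 + (i.1 (odIdx h e0)).1 := by
      by_contra hno
      push_neg at hno
      have hb : ∑ e : Fin (h+1), ((i.1 (evIdx h e)).1 + (i.1 (odIdx h e)).1)
          ≤ ∑ e : Fin (h+1), (if e.1 < μ then d - 2 else 0) := by
        refine Finset.sum_le_sum fun e _ => ?_
        by_cases hcμ : e.1 < μ
        · rw [if_pos hcμ]; exact hτle e
        · rw [if_neg hcμ]; have := hno e (by omega); omega
      rw [Fin.sum_univ_eq_sum_range (fun k => if k < μ then d - 2 else 0) (h+1),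
          sum_if_lt _ _ _ (by omega), hsum] at hb
      have hmul : h * d = h * (d - 2) + 2 * h := by
        have hdd : d - 2 + 2 = d := by omega
        calc h * d = h * (d - 2 + 2) := by rw [hdd]
          _ = h * (d - 2) + 2 * h := by ring
      rw [hmul] at hb
      obtain ⟨A, hA⟩ : ∃ A, μ * (d-2) = A := ⟨_, rfl⟩
      obtain ⟨B, hB⟩ : ∃ B, h * (d-2) = B := ⟨_, rfl⟩
      rw [hA, hB] at hb harith
      omega
    obtain ⟨e0, he0μ, he0τ⟩ := hex
    have hμe0 : ¬ (e0.1 < μ) := by omega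
    have haE : (i.1 (evIdx h e0)).1 < d - 1 := (i.1 (evIdx h e0)).isLt
    have haO : (i.1 (odIdx h e0)).1 < d - 1 := (i.1 (odIdx h e0)).isLt
    have hτe0 := hτle e0
    obtain ⟨nE, nO, hEO, hcase⟩ :
        ∃ nE nO : Fin (d-1), nE.1 + nO.1 = (i.1 (evIdx h e0)).1 + (i.1 (odIdx h e0)).1 ∧
          (nE.1 = (i.1 (evIdx h e0)).1 + 1 ∨ (i.1 (evIdx h e0)).1 = nE.1 + 1) := by
      by_cases hdir : (i.1 (evIdx h e0)).1 + 1 ≤ d - 2 ∧ 1 ≤ (i.1 (odIdx h e0)).1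
      · exact ⟨⟨(i.1 (evIdx h e0)).1 + 1, by omega⟩, ⟨(i.1 (odIdx h e0)).1 - 1, by omega⟩,
          by simp only []; omega, Or.inl rfl⟩
      · refine ⟨⟨(i.1 (evIdx h e0)).1 - 1, by omega⟩, ⟨(i.1 (odIdx h e0)).1 + 1, by omega⟩,
          by simp only []; omega, Or.inr (by simp only []; omega)⟩
    obtain ⟨i', hi'1⟩ : ∃ i' : IdxSet h d (h*d - (2*h+2)),
        i'.1 = modRow h d i.1 e0 nE nO := by
      refine ⟨⟨modRow h d i.1 e0 nE nO, ?_⟩, rfl⟩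
      refine Eq.trans ?_ i.2
      exact sum_pair_swap (fun k => (i.1 k).1) (fun k => (modRow h d i.1 e0 nE nO k).1)
        (evIdx h e0) (odIdx h e0) (evIdx_ne_odIdx h e0 e0)
        (by simp only [modRow_ev0, modRow_od0]; omega)
        (fun k h1 h2 => by simp only [modRow_other h d i.1 e0 nE nO k h1 h2])
    -- τ is preserved
    have hττ : (fun e => (i'.1 (evIdx h e)).1 + (i'.1 (odIdx h e)).1)
        = (fun e => (i.1 (evIdx h e)).1 + (i.1 (odIdx h e)).1) := by
      funext e
      by_cases he : e = e0
      · subst he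
        rw [hi'1, modRow_ev0, modRow_od0]
        omega
      · rw [hi'1, modRow_ev h d i.1 e0 nE nO e he, modRow_od h d i.1 e0 nE nO e he]
    -- the two linear equations
    have hxi := hx i
    have hxi' := hx i'
    simp only [Pvec, PcheckVec] at hxi hxi' ⊢
    rw [rowsum_eq h d (fun _ => 0) x i,
        rowsum_eq h d (fun e => if e.1 < μ then 0 else 1) x i] at hxi
    rw [rowsum_eq h d (fun _ => 0) x i',
        rowsum_eq h d (fun e => if e.1 < μ then 0 else 1) x i', hττ] at hxi'
    rw [rowsum_eq h d (fun _ => 0) x i,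
        rowsum_eq h d (fun e => if e.1 < μ then 0 else 1) x i]
    rcases hcase with hnE | hnE
    · -- exponent of i' is exponent of i plus (1 resp. 3)
      have hshiftA : ∑ e : Fin (h+1), ((i'.1 (evIdx h e)).1 + 1) * (1 + 2 * (fun _ : Fin (h+1) => (0:ℕ)) e)
          = (∑ e : Fin (h+1), ((i.1 (evIdx h e)).1 + 1) * (1 + 2 * (fun _ : Fin (h+1) => (0:ℕ)) e)) + 1 := by
        refine sum_add_at _ _ e0 1 ?_ ?_
        · rw [hi'1, modRow_ev0, hnE]; simp only []; ring
        · intro e he; rw [hi'1, modRow_ev h d i.1 e0 nE nO e he]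
      have hshiftB : ∑ e : Fin (h+1), ((i'.1 (evIdx h e)).1 + 1) * (1 + 2 * (fun e : Fin (h+1) => if e.1 < μ then (0:ℕ) else 1) e)
          = (∑ e : Fin (h+1), ((i.1 (evIdx h e)).1 + 1) * (1 + 2 * (fun e : Fin (h+1) => if e.1 < μ then (0:ℕ) else 1) e)) + 3 := by
        refine sum_add_at _ _ e0 3 ?_ ?_
        · rw [hi'1, modRow_ev0, hnE]; simp only [if_neg hμe0]; ring
        · intro e he; rw [hi'1, modRow_ev h d i.1 e0 nE nO e he]
      rw [hshiftA, hshiftB] at hxi'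
      obtain ⟨hF, hG⟩ := cancel_lemma (zeta2d d) r rc _ _ hζ0 hζ2 hr hrc _ _ hxi hxi'
      rw [hF, hG, mul_zero, mul_zero]
      exact ⟨rfl, rfl⟩
    · have hshiftA : ∑ e : Fin (h+1), ((i.1 (evIdx h e)).1 + 1) * (1 + 2 * (fun _ : Fin (h+1) => (0:ℕ)) e)
          = (∑ e : Fin (h+1), ((i'.1 (evIdx h e)).1 + 1) * (1 + 2 * (fun _ : Fin (h+1) => (0:ℕ)) e)) + 1 := by
        refine sum_add_at _ _ e0 1 ?_ ?_
        · rw [hi'1, modRow_ev0, hnE]; simp only []; ring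
        · intro e he; rw [hi'1, modRow_ev h d i.1 e0 nE nO e he]
      have hshiftB : ∑ e : Fin (h+1), ((i.1 (evIdx h e)).1 + 1) * (1 + 2 * (fun e : Fin (h+1) => if e.1 < μ then (0:ℕ) else 1) e)
          = (∑ e : Fin (h+1), ((i'.1 (evIdx h e)).1 + 1) * (1 + 2 * (fun e : Fin (h+1) => if e.1 < μ then (0:ℕ) else 1) e)) + 3 := by
        refine sum_add_at _ _ e0 3 ?_ ?_
        · rw [hi'1, modRow_ev0, hnE]; simp only [if_neg hμe0]; ring
        · intro e he; rw [hi'1, modRow_ev h d i.1 e0 nE nO e he]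
      rw [hshiftA, hshiftB] at hxi
      obtain ⟨hF, hG⟩ := cancel_lemma (zeta2d d) r rc _ _ hζ0 hζ2 hr hrc _ _ hxi' hxi
      rw [hshiftA, hshiftB, hF, hG, mul_zero, mul_zero]
      exact ⟨rfl, rfl⟩


/-- For the triples `(n,d,m)` of Theorem `27.03.17` and all nonzero integers `r, ř`,
the kernel of `r·[P_{i+j}] + ř·[(P̌_m)_{i+j}]` (as a linear map `ℂ^{I_d} → ℂ^{I_{(n/2)d−n−2}}`)
equals `ker[P_{i+j}] ∩ ker[(P̌_m)_{i+j}]`; in particular it does not depend on `r, ř`. -/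
theorem ker_combination_eq_inter (h d μ : ℕ) (hin : TripleList h d μ)
    (r rc : ℤ) (hr : r ≠ 0) (hrc : rc ≠ 0) :
    LinearMap.ker ((r : ℂ) • pmat h d (Pvec h d)
        + (rc : ℂ) • pmat h d (PcheckVec h d μ)).mulVecLin
      = LinearMap.ker (pmat h d (Pvec h d)).mulVecLin ⊓
        LinearMap.ker (pmat h d (PcheckVec h d μ)).mulVecLin := by
  have hfacts : 3 ≤ d ∧ μ ≤ h ∧ μ * (d-2) + 3 ≤ h * (d-2) := by
    rcases hin with ⟨rfl, hd1, hd2, rfl⟩ |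
      ⟨rfl, ⟨rfl, rfl⟩ | ⟨rfl, rfl⟩ | ⟨rfl, rfl⟩ | ⟨rfl, rfl⟩ | ⟨rfl, rfl⟩⟩ |
      ⟨rfl, ⟨rfl, rfl⟩ | ⟨rfl, rfl⟩ | ⟨rfl, rfl⟩⟩ |
      ⟨rfl, rfl, rfl | rfl⟩ |
      ⟨rfl, rfl, rfl | rfl | rfl⟩ <;> omega
  obtain ⟨hd3, hμh, harith⟩ := hfacts
  have hrC : (r : ℂ) ≠ 0 := Int.cast_ne_zero.mpr hr
  have hrcC : (rc : ℂ) ≠ 0 := Int.cast_ne_zero.mpr hrc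
  apply le_antisymm
  · intro x hx
    rw [LinearMap.mem_ker, Matrix.mulVecLin_apply] at hx
    have hx' : ∀ k : IdxSet h d (h*d - (2*h+2)),
        (r : ℂ) * (∑ j, pmat h d (Pvec h d) k j * x j)
          + (rc : ℂ) * (∑ j, pmat h d (PcheckVec h d μ) k j * x j) = 0 := by
      intro k
      have hk := congrFun hx k
      simp only [Matrix.mulVec, dotProduct, Matrix.add_apply, Matrix.smul_apply,
        smul_eq_mul, Pi.zero_apply, add_mul, Finset.sum_add_distrib] at hk
      rw [Finset.mul_sum, Finset.mul_sum]
      rw [Finset.sum_congr rfl fun j _ => (mul_assoc (r:ℂ) _ _),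
          Finset.sum_congr rfl fun j _ => (mul_assoc (rc:ℂ) _ _)] at hk
      exact hk
    have hrows := fun k => row_zero h d μ hd3 hμh harith _ _ hrC hrcC x hx' k
    rw [Submodule.mem_inf]
    constructor
    · rw [LinearMap.mem_ker, Matrix.mulVecLin_apply]
      funext k
      simp only [Matrix.mulVec, dotProduct, Pi.zero_apply]
      exact (hrows k).1
    · rw [LinearMap.mem_ker, Matrix.mulVecLin_apply]
      funext k
      simp only [Matrix.mulVec, dotProduct, Pi.zero_apply]
      exact (hrows k).2
  · intro x hx
    rw [Submodule.mem_inf, LinearMap.mem_ker, LinearMap.mem_ker,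
      Matrix.mulVecLin_apply, Matrix.mulVecLin_apply] at hx
    rw [LinearMap.mem_ker, Matrix.mulVecLin_apply, Matrix.add_mulVec,
      Matrix.smul_mulVec, Matrix.smul_mulVec, hx.1, hx.2]
    simp
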